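/- Let y : [0,∞) → ℝⁿ be absolutely continuous (in particular differentiable almost everywhere) and suppose there are constants a > 0 and b ≥ 0 such that ⟨y'(t), y(t)⟩ ≤ -a‖y(t)‖² + b‖y(t)‖ for almost every t ≥ 0. Then limsup_{t→∞} ‖y(t)‖ ≤ b/a. -/

import Mathlib

open MeasureTheory Set
open scoped RealInnerProductSpace

/-- Symmetric Fubini trick: `2∫_s^t ⟪g τ, ∫_s^τ g⟫ dτ = ‖∫_s^t g‖²`. -/
lemma two_mul_integral_inner_primitive {n : ℕ} (g : ℝ → EuclideanSpace ℝ (Fin n)) {s t : ℝ}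
    (hg : IntegrableOn g (Ioc s t)) :
    (2:ℝ) * ∫ τ in Ioc s t, ⟪g τ, (∫ σ in Ioc s τ, g σ)⟫
      = ‖∫ σ in Ioc s t, g σ‖ ^ 2 := by
  set u := Ioc s t with hu
  set μ := volume.restrict u with hμ
  have hum : MeasurableSet u := measurableSet_Ioc
  have hgm : AEStronglyMeasurable g μ := hg.aestronglyMeasurable
  set K : ℝ × ℝ → ℝ := fun p => ⟪g p.1, g p.2⟫ with hKdef
  have hKm : AEStronglyMeasurable K (μ.prod μ) := hgm.comp_fst.inner hgm.comp_snd
  have hKτ : ∀ τ : ℝ, Integrable (fun σ => K (τ, σ)) μ := fun τ => hg.const_inner (g τ)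
  set F₁ : ℝ × ℝ → ℝ := Set.indicator {p : ℝ × ℝ | p.2 ≤ p.1} K with hF₁def
  set F₂ : ℝ × ℝ → ℝ := Set.indicator {p : ℝ × ℝ | p.1 < p.2} K with hF₂def
  have hF₁eq : ∀ p : ℝ × ℝ, F₁ p = if p.2 ≤ p.1 then K p else 0 := by
    intro p; simp [hF₁def, Set.indicator]
  have hF₂eq : ∀ p : ℝ × ℝ, F₂ p = if p.1 < p.2 then K p else 0 := by
    intro p; simp [hF₂def, Set.indicator]
  have hF₁τ : ∀ τ : ℝ, Integrable (fun σ => F₁ (τ, σ)) μ := by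
    intro τ
    have h : (fun σ => F₁ (τ, σ)) = (Iic τ).indicator (fun σ => K (τ, σ)) := by
      funext σ; simp [hF₁eq, Set.indicator]
    rw [h]; exact (hKτ τ).indicator measurableSet_Iic
  have hF₂τ : ∀ τ : ℝ, Integrable (fun σ => F₂ (τ, σ)) μ := by
    intro τ
    have h : (fun σ => F₂ (τ, σ)) = (Ioi τ).indicator (fun σ => K (τ, σ)) := by
      funext σ; simp [hF₂eq, Set.indicator]
    rw [h]; exact (hKτ τ).indicator measurableSet_Ioi
  -- uncurried integrability of F₁ and F₂
  have hP : Integrable (fun p : ℝ × ℝ => ‖g p.1‖ * ‖g p.2‖) (μ.prod μ) :=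
    hg.norm.mul_prod hg.norm
  have hbd : ∀ (S : Set (ℝ × ℝ)) (p : ℝ × ℝ), ‖S.indicator K p‖ ≤ ‖g p.1‖ * ‖g p.2‖ := by
    intro S p
    calc ‖S.indicator K p‖ ≤ ‖K p‖ := norm_indicator_le_norm_self _ _
    _ ≤ ‖g p.1‖ * ‖g p.2‖ := norm_inner_le_norm _ _
  have hF₁int : Integrable F₁ (μ.prod μ) := by
    refine hP.mono' (hKm.indicator (measurableSet_le measurable_snd measurable_fst)) ?_
    exact Filter.Eventually.of_forall fun p => hbd _ p
  have hF₂int : Integrable F₂ (μ.prod μ) := by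
    refine hP.mono' (hKm.indicator (measurableSet_lt measurable_fst measurable_snd)) ?_
    exact Filter.Eventually.of_forall fun p => hbd _ p
  -- rewrite the inner integrals as integrals of indicators over u
  have a₁ : ∀ τ ∈ u, ⟪g τ, (∫ σ in Ioc s τ, g σ)⟫ = ∫ σ, F₁ (τ, σ) ∂μ := by
    intro τ hτ
    have h1 : ⟪g τ, (∫ σ in Ioc s τ, g σ)⟫ = ∫ σ in Ioc s τ, K (τ, σ) :=
      (integral_inner (hg.mono_set (Ioc_subset_Ioc_right hτ.2)) (g τ)).symm
    have h2 : u ∩ Iic τ = Ioc s τ := by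
      rw [hu]; ext σ
      simp only [mem_inter_iff, mem_Ioc, mem_Iic]
      exact ⟨fun ⟨⟨h', _⟩, h''⟩ => ⟨h', h''⟩, fun ⟨h', h''⟩ => ⟨⟨h', h''.trans hτ.2⟩, h''⟩⟩
    have h3 : ∫ σ, F₁ (τ, σ) ∂μ = ∫ σ in u ∩ Iic τ, K (τ, σ) := by
      rw [hμ, ← setIntegral_indicator measurableSet_Iic]
      refine setIntegral_congr_fun hum fun σ hσ => ?_
      simp [hF₁eq, Set.indicator]
    rw [h1, h3, h2]
  have a₂ : ∀ τ ∈ u, ⟪g τ, (∫ σ in Ioc τ t, g σ)⟫ = ∫ σ, F₂ (τ, σ) ∂μ := by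
    intro τ hτ
    have h1 : ⟪g τ, (∫ σ in Ioc τ t, g σ)⟫ = ∫ σ in Ioc τ t, K (τ, σ) :=
      (integral_inner (hg.mono_set (Ioc_subset_Ioc_left hτ.1.le)) (g τ)).symm
    have h2 : u ∩ Ioi τ = Ioc τ t := by
      rw [hu]; ext σ
      simp only [mem_inter_iff, mem_Ioc, mem_Ioi]
      exact ⟨fun ⟨⟨_, h''⟩, h'⟩ => ⟨h', h''⟩, fun ⟨h', h''⟩ => ⟨⟨hτ.1.trans h', h''⟩, h'⟩⟩
    have h3 : ∫ σ, F₂ (τ, σ) ∂μ = ∫ σ in u ∩ Ioi τ, K (τ, σ) := by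
      rw [hμ, ← setIntegral_indicator measurableSet_Ioi]
      refine setIntegral_congr_fun hum fun σ hσ => ?_
      simp [hF₂eq, Set.indicator]
    rw [h1, h3, h2]
  set I : EuclideanSpace ℝ (Fin n) := ∫ σ in u, g σ with hI
  set A : ℝ := ∫ τ in u, ⟪g τ, (∫ σ in Ioc s τ, g σ)⟫ with hA
  set B : ℝ := ∫ τ in u, ⟪g τ, (∫ σ in Ioc τ t, g σ)⟫ with hB
  have hAeq : A = ∫ τ, (∫ σ, F₁ (τ, σ) ∂μ) ∂μ := by
    rw [hA, hμ]
    exact setIntegral_congr_fun hum fun τ hτ => a₁ τ hτ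
  have hBeq : B = ∫ τ, (∫ σ, F₂ (τ, σ) ∂μ) ∂μ := by
    rw [hB, hμ]
    exact setIntegral_congr_fun hum fun τ hτ => a₂ τ hτ
  have hsum : A + B = ‖I‖ ^ 2 := by
    have h1 : A + B = ∫ τ, ⟪g τ, I⟫ ∂μ := by
      rw [hAeq, hBeq, ← integral_add hF₁int.integral_prod_left hF₂int.integral_prod_left]
      refine integral_congr_ae (ae_restrict_iff' hum |>.2 (Filter.Eventually.of_forall
        fun τ hτ => ?_))
      show (∫ σ, F₁ (τ, σ) ∂μ) + (∫ σ, F₂ (τ, σ) ∂μ) = ⟪g τ, I⟫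
      rw [← integral_add (hF₁τ τ) (hF₂τ τ)]
      have hptw : ∀ σ, F₁ (τ, σ) + F₂ (τ, σ) = K (τ, σ) := by
        intro σ
        by_cases h : σ ≤ τ
        · simp [hF₁eq, hF₂eq, h, not_lt.mpr h]
        · simp [hF₁eq, hF₂eq, h, not_le.mp h]
      have hKI : ∫ σ, K (τ, σ) ∂μ = ⟪g τ, I⟫ := integral_inner hg (g τ)
      rw [← hKI]
      exact integral_congr_ae (Filter.Eventually.of_forall fun σ => hptw σ)
    rw [h1]
    have hc : ∀ τ, ⟪g τ, I⟫ = ⟪I, g τ⟫ := fun τ => real_inner_comm _ _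
    rw [integral_congr_ae (Filter.Eventually.of_forall hc), integral_inner hg I,
      real_inner_self_eq_norm_sq]
  have hswap : B = A := by
    have hswapped : (∫ τ, (∫ σ, F₂ (τ, σ) ∂μ) ∂μ) = ∫ σ, (∫ τ, F₂ (τ, σ) ∂μ) ∂μ :=
      integral_integral_swap (by exact hF₂int)
    rw [hBeq, hswapped, hAeq]
    -- now : ∫ σ, ∫ τ, F₂ (τ, σ) dτ dσ = ∫ τ, ∫ σ, F₁ (τ, σ) dσ dτ
    refine integral_congr_ae (Filter.Eventually.of_forall fun x => ?_)
    have hx : ∀ᵐ yy ∂μ, yy ≠ x := by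
      have h0 : μ {x} = 0 := by
        rw [hμ, Measure.restrict_apply (measurableSet_singleton x)]
        exact measure_mono_null Set.inter_subset_left Real.volume_singleton
      rw [Filter.eventually_iff, mem_ae_iff]
      convert h0 using 2
      ext z; simp
    refine integral_congr_ae (hx.mono fun y hy => ?_)
    show F₂ (y, x) = F₁ (x, y)
    rw [hF₂eq, hF₁eq]
    by_cases h : y < x
    · rw [if_pos h, if_pos h.le]
      exact real_inner_comm _ _
    · rw [if_neg h, if_neg (fun h' : y ≤ x => h (lt_of_le_of_ne h' hy))]
  have : A + A = ‖I‖ ^ 2 := by rw [← hswap] at hsum ⊢; linarith [hsum]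
  linarith [this]

lemma inner_y_integrableOn {n : ℕ} (y g : ℝ → EuclideanSpace ℝ (Fin n))
    (hcont : ContinuousOn y (Set.Ici 0))
    (hint : ∀ T : ℝ, IntegrableOn g (Set.Icc 0 T))
    {s t : ℝ} (h0s : 0 ≤ s) (hst : s ≤ t) :
    IntegrableOn (fun τ => ⟪g τ, y τ⟫) (Ioc s t) := by
  have hgint : IntegrableOn g (Ioc s t) :=
    (hint t).mono_set (fun x hx => ⟨h0s.trans hx.1.le, hx.2⟩)
  have hysub : Icc s t ⊆ Ici (0:ℝ) := fun x hx => h0s.trans hx.1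
  have hyc : ContinuousOn y (Icc s t) := hcont.mono hysub
  obtain ⟨M, hM⟩ := isCompact_Icc.exists_bound_of_continuousOn hyc
  have hym : AEStronglyMeasurable y (volume.restrict (Ioc s t)) :=
    (hyc.aestronglyMeasurable measurableSet_Icc).mono_measure
      (Measure.restrict_mono Ioc_subset_Icc_self le_rfl)
  refine (hgint.norm.mul_const M).mono' (hgint.aestronglyMeasurable.inner hym) ?_
  refine (ae_restrict_mem measurableSet_Ioc).mono fun τ hτ => ?_
  calc ‖⟪g τ, y τ⟫‖ ≤ ‖g τ‖ * ‖y τ‖ := norm_inner_le_norm _ _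
  _ ≤ ‖g τ‖ * M := by
      exact mul_le_mul_of_nonneg_left (hM τ (Ioc_subset_Icc_self hτ)) (norm_nonneg _)

lemma key_ftc {n : ℕ} (y g : ℝ → EuclideanSpace ℝ (Fin n))
    (hcont : ContinuousOn y (Set.Ici 0))
    (hint : ∀ T : ℝ, IntegrableOn g (Set.Icc 0 T))
    (hftc : ∀ t ∈ Set.Ici (0:ℝ), y t = y 0 + ∫ τ in (0:ℝ)..t, g τ)
    {s t : ℝ} (h0s : 0 ≤ s) (hst : s ≤ t) :
    ‖y t‖ ^ 2 = ‖y s‖ ^ 2 + ∫ τ in Ioc s t, 2 * ⟪g τ, y τ⟫ := by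
  have hgint : IntegrableOn g (Ioc s t) :=
    (hint t).mono_set (fun x hx => ⟨h0s.trans hx.1.le, hx.2⟩)
  have hii : ∀ p q : ℝ, 0 ≤ p → p ≤ q → IntervalIntegrable g volume p q := by
    intro p q hp hpq
    refine IntegrableOn.intervalIntegrable ?_
    rw [uIcc_of_le hpq]
    exact (hint q).mono_set (Icc_subset_Icc_left hp)
  set I : ℝ → EuclideanSpace ℝ (Fin n) := fun τ => ∫ σ in Ioc s τ, g σ with hIdef
  have hyrep : ∀ τ ∈ Icc s t, y τ = y s + I τ := by
    intro τ hτ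
    have h0τ : 0 ≤ τ := h0s.trans hτ.1
    have e3 : ∫ σ in (0:ℝ)..τ, g σ = (∫ σ in (0:ℝ)..s, g σ) + ∫ σ in s..τ, g σ :=
      (intervalIntegral.integral_add_adjacent_intervals (hii 0 s le_rfl h0s)
        (hii s τ h0s hτ.1)).symm
    rw [hftc τ h0τ, hftc s h0s, e3, ← add_assoc, hIdef]
    rw [intervalIntegral.integral_of_le hτ.1]
  -- continuity and boundedness of I
  have hIcont : ContinuousOn I (Icc s t) :=
    intervalIntegral.continuousOn_primitive ((hint t).mono_set (Icc_subset_Icc_left h0s))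
  obtain ⟨C, hC⟩ := isCompact_Icc.exists_bound_of_continuousOn hIcont
  have hIm : AEStronglyMeasurable I (volume.restrict (Ioc s t)) :=
    (hIcont.aestronglyMeasurable measurableSet_Icc).mono_measure
      (Measure.restrict_mono Ioc_subset_Icc_self le_rfl)
  have hinnerI : IntegrableOn (fun τ => ⟪g τ, I τ⟫) (Ioc s t) := by
    refine (hgint.norm.mul_const C).mono' (hgint.aestronglyMeasurable.inner hIm) ?_
    refine (ae_restrict_mem measurableSet_Ioc).mono fun τ hτ => ?_
    calc ‖⟪g τ, I τ⟫‖ ≤ ‖g τ‖ * ‖I τ‖ := norm_inner_le_norm _ _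
    _ ≤ ‖g τ‖ * C := by
        exact mul_le_mul_of_nonneg_left (hC τ (Ioc_subset_Icc_self hτ)) (norm_nonneg _)
  have hsplit : ∫ τ in Ioc s t, 2 * ⟪g τ, y τ⟫
      = (∫ τ in Ioc s t, 2 * ⟪g τ, y s⟫) + ∫ τ in Ioc s t, 2 * ⟪g τ, I τ⟫ := by
    rw [← integral_add ((hgint.inner_const (y s)).const_mul 2) (hinnerI.const_mul 2)]
    refine setIntegral_congr_fun measurableSet_Ioc fun τ hτ => ?_
    rw [hyrep τ (Ioc_subset_Icc_self hτ), inner_add_right]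
    ring
  have h1 : ∫ τ in Ioc s t, 2 * ⟪g τ, y s⟫ = 2 * ⟪y s, I t⟫ := by
    rw [integral_const_mul]
    congr 1
    have : ∀ τ, ⟪g τ, y s⟫ = ⟪y s, g τ⟫ := fun τ => real_inner_comm _ _
    rw [integral_congr_ae (Filter.Eventually.of_forall this), integral_inner hgint (y s)]
  have h2 : ∫ τ in Ioc s t, 2 * ⟪g τ, I τ⟫ = ‖I t‖ ^ 2 := by
    rw [integral_const_mul, two_mul_integral_inner_primitive g hgint]
  have h3 : y t = y s + I t := hyrep t ⟨hst, le_rfl⟩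
  rw [hsplit, h1, h2, h3, norm_add_sq_real]
  ring

lemma norm_sq_decrease {n : ℕ} (y g : ℝ → EuclideanSpace ℝ (Fin n)) {a b c : ℝ}
    (ha : 0 < a) (hb : 0 ≤ b) (hc0 : 0 < c) (hcb : b / a < c)
    (hcont : ContinuousOn y (Set.Ici 0))
    (hint : ∀ T : ℝ, IntegrableOn g (Set.Icc 0 T))
    (hftc : ∀ t ∈ Set.Ici (0:ℝ), y t = y 0 + ∫ τ in (0:ℝ)..t, g τ)
    (hineq : ∀ᵐ t ∂(volume.restrict (Set.Ici (0:ℝ))),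
      ⟪g t, y t⟫ ≤ -a * ‖y t‖ ^ 2 + b * ‖y t‖)
    {s t : ℝ} (h0s : 0 ≤ s) (hst : s ≤ t) (hge : ∀ τ ∈ Ioc s t, c ≤ ‖y τ‖) :
    ‖y t‖ ^ 2 ≤ ‖y s‖ ^ 2 - 2 * (a * c - b) * c * (t - s) := by
  have hb' : b < a * c := by
    have := (div_lt_iff₀ ha).1 hcb
    linarith
  have hkey := key_ftc y g hcont hint hftc h0s hst
  have hIoc : Ioc s t ⊆ Ici (0:ℝ) := fun x hx => h0s.trans hx.1.le
  have hae : ∀ᵐ τ ∂(volume.restrict (Ioc s t)),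
      2 * ⟪g τ, y τ⟫ ≤ -(2 * (a * c - b) * c) := by
    have h1 := ae_restrict_of_ae_restrict_of_subset hIoc hineq
    have h2 := ae_restrict_mem (μ := volume) (s := Ioc s t) measurableSet_Ioc
    filter_upwards [h1, h2] with τ hτ1 hτ2
    have hr : c ≤ ‖y τ‖ := hge τ hτ2
    nlinarith [mul_nonneg (sub_nonneg.2 hr) (sub_nonneg.2 hb'.le),
      mul_nonneg (mul_nonneg ha.le (hc0.le.trans hr)) (sub_nonneg.2 hr)]
  have hmono := integral_mono_ae
    ((inner_y_integrableOn y g hcont hint h0s hst).const_mul 2)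
    (integrable_const (-(2 * (a * c - b) * c))) hae
  rw [setIntegral_const] at hmono
  rw [Real.volume_real_Ioc_of_le hst, smul_eq_mul] at hmono
  nlinarith [hkey, hmono]


/-- If `y : [0,∞) → ℝⁿ` is absolutely continuous (continuous, with a.e. derivative `y'`
locally integrable and satisfying the fundamental theorem of calculus) and
`⟨y'(t), y(t)⟩ ≤ -a‖y(t)‖² + b‖y(t)‖` for a.e. `t ≥ 0` with `a > 0`, `b ≥ 0`, then
`limsup_{t→∞} ‖y(t)‖ ≤ b/a`. -/
theorem limsup_norm_le_of_ae_inner_deriv_bound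
    {n : ℕ} (y y' : ℝ → EuclideanSpace ℝ (Fin n)) (a b : ℝ)
    (ha : 0 < a) (hb : 0 ≤ b)
    (hcont : ContinuousOn y (Set.Ici 0))
    (hint : ∀ T : ℝ, IntegrableOn y' (Set.Icc 0 T))
    (hftc : ∀ t ∈ Set.Ici (0:ℝ), y t = y 0 + ∫ τ in (0:ℝ)..t, y' τ)
    (hderiv : ∀ᵐ t ∂(volume.restrict (Set.Ici (0:ℝ))), HasDerivAt y (y' t) t)
    (hineq : ∀ᵐ t ∂(volume.restrict (Set.Ici (0:ℝ))),
      inner ℝ (y' t) (y t) ≤ -a * ‖y t‖ ^ 2 + b * ‖y t‖) :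
    Filter.limsup (fun t => ‖y t‖) Filter.atTop ≤ b / a := by
  refine le_of_forall_pos_le_add fun ε hε => ?_
  have hba : 0 ≤ b / a := div_nonneg hb ha.le
  set c := b / a + ε with hc
  have hc0 : 0 < c := by positivity
  have hcb : b / a < c := lt_add_of_pos_right _ hε
  set δ := 2 * (a * c - b) * c with hδ
  have hb' : b < a * c := by
    have := (div_lt_iff₀ ha).1 hcb
    linarith
  have hδpos : 0 < δ := by rw [hδ]; nlinarith
  have hdec : ∀ s t : ℝ, 0 ≤ s → s ≤ t → (∀ τ ∈ Ioc s t, c ≤ ‖y τ‖) →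
      ‖y t‖ ^ 2 ≤ ‖y s‖ ^ 2 - δ * (t - s) := fun s t h0s hst hge =>
    norm_sq_decrease y y' ha hb hc0 hcb hcont hint hftc hineq h0s hst hge
  -- Step 1: the norm eventually drops below `c`
  have hreach : ∃ t₀, 0 ≤ t₀ ∧ ‖y t₀‖ ≤ c := by
    by_contra h
    push_neg at h
    set T := (‖y 0‖ ^ 2 + 1) / δ with hT
    have hT0 : 0 ≤ T := div_nonneg (by positivity) hδpos.le
    have hd := hdec 0 T le_rfl hT0 (fun τ hτ => (h τ hτ.1.le).le)
    have hδT : δ * T = ‖y 0‖ ^ 2 + 1 := by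
      rw [hT]; field_simp
    nlinarith [sq_nonneg ‖y T‖]
  obtain ⟨t₀, ht₀, hyt₀⟩ := hreach
  -- Step 2: once below `c`, it stays below `c`
  have hstay : ∀ t, t₀ ≤ t → ‖y t‖ ≤ c := by
    intro t₁ ht₁
    by_contra hgt
    push_neg at hgt
    set S := {τ | τ ∈ Icc t₀ t₁ ∧ ‖y τ‖ ≤ c} with hS
    have hSne : S.Nonempty := ⟨t₀, ⟨le_rfl, ht₁⟩, hyt₀⟩
    have hSbdd : BddAbove S := ⟨t₁, fun τ hτ => hτ.1.2⟩
    have hsub : Icc t₀ t₁ ⊆ Ici (0:ℝ) := fun x hx => ht₀.trans hx.1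
    have hScl : IsClosed S := by
      have hSeq : S = Icc t₀ t₁ ∩ (fun τ => ‖y τ‖) ⁻¹' Iic c := by
        ext τ; simp [hS]
      rw [hSeq]
      exact ((hcont.mono hsub).norm).preimage_isClosed_of_isClosed isClosed_Icc isClosed_Iic
    set σ₀ := sSup S with hσ₀
    have hσS : σ₀ ∈ S := hScl.csSup_mem hSne hSbdd
    have hσt₁ : σ₀ ≤ t₁ := hσS.1.2
    have h0σ : 0 ≤ σ₀ := ht₀.trans hσS.1.1
    have hge : ∀ τ ∈ Ioc σ₀ t₁, c ≤ ‖y τ‖ := by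
      intro τ hτ
      by_contra hlt
      push_neg at hlt
      have hτS : τ ∈ S := ⟨⟨hσS.1.1.trans hτ.1.le, hτ.2⟩, hlt.le⟩
      exact absurd (le_csSup hSbdd hτS) (not_le.2 hτ.1)
    have hd := hdec σ₀ t₁ h0σ hσt₁ hge
    nlinarith [hσS.2, norm_nonneg (y σ₀), norm_nonneg (y t₁),
      mul_nonneg hδpos.le (sub_nonneg.2 hσt₁)]
  exact Filter.limsup_le_of_le
    (Filter.isCoboundedUnder_le_of_le Filter.atTop fun i => norm_nonneg (y i))
    (Filter.eventually_atTop.2 ⟨t₀, fun t ht => hstay t ht⟩)
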